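/- Let k = 2m be an even integer with m ≥ 1, and let X, Y, Z, W be rational numbers with X^k + Y^k = Z^k + W^k, ZW ≠ 0, and XYZW·(X^k − Y^k)·(X^k − W^k)·(Y^k − W^k) ≠ 0. Then the numbers a = (X^k − W^k)/(Z^m W^m), b = −(W/Z)^m, c = (Y^k − W^k)/(Z^m W^m), d = (Z/W)^m are pairwise distinct and nonzero, and each of ab+1, ac+1, ad+1, bc+1, bd+1, cd+1 is a kth power of a rational number; hence they form a kth power rational Diophantine quadruple. -/

import Mathlib

lemma fe_aux (x y z w : ℚ) (hx : x ≠ 0) (hy : y ≠ 0) (hz : z ≠ 0) (hw : w ≠ 0)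
    (hE : x ^ 2 + y ^ 2 = z ^ 2 + w ^ 2)
    (hXY : x ^ 2 - y ^ 2 ≠ 0) (hXW : x ^ 2 - w ^ 2 ≠ 0) (hYW : y ^ 2 - w ^ 2 ≠ 0) :
    ((x ^ 2 - w ^ 2) / (z * w) ≠ -(w / z) ∧
     (x ^ 2 - w ^ 2) / (z * w) ≠ (y ^ 2 - w ^ 2) / (z * w) ∧
     (x ^ 2 - w ^ 2) / (z * w) ≠ z / w ∧
     -(w / z) ≠ (y ^ 2 - w ^ 2) / (z * w) ∧
     -(w / z) ≠ z / w ∧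
     (y ^ 2 - w ^ 2) / (z * w) ≠ z / w) ∧
    ((x ^ 2 - w ^ 2) / (z * w) ≠ 0 ∧ -(w / z) ≠ 0 ∧
     (y ^ 2 - w ^ 2) / (z * w) ≠ 0 ∧ z / w ≠ 0) ∧
    ((x ^ 2 - w ^ 2) / (z * w) * -(w / z) + 1 = (y / z) ^ 2) ∧
    ((x ^ 2 - w ^ 2) / (z * w) * ((y ^ 2 - w ^ 2) / (z * w)) + 1 = (x * y / (z * w)) ^ 2) ∧
    ((x ^ 2 - w ^ 2) / (z * w) * (z / w) + 1 = (x / w) ^ 2) ∧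
    (-(w / z) * ((y ^ 2 - w ^ 2) / (z * w)) + 1 = (x / z) ^ 2) ∧
    (-(w / z) * (z / w) + 1 = 0) ∧
    ((y ^ 2 - w ^ 2) / (z * w) * (z / w) + 1 = (y / w) ^ 2) := by
  refine ⟨⟨?_, ?_, ?_, ?_, ?_, ?_⟩, ⟨?_, ?_, ?_, ?_⟩, ?_, ?_, ?_, ?_, ?_, ?_⟩
  · intro h; field_simp at h
    have hx2 : x ^ 2 * z = 0 := by linear_combination z * h
    rcases mul_eq_zero.mp hx2 with h' | h'
    · exact hx (pow_eq_zero_iff two_ne_zero |>.mp h')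
    · exact hz h'
  · intro h; field_simp at h
    exact hXY (by linarith)
  · intro h; field_simp at h
    have hy2 : y ^ 2 * w = 0 := by linear_combination w * hE - w * h
    rcases mul_eq_zero.mp hy2 with h' | h'
    · exact hy (pow_eq_zero_iff two_ne_zero |>.mp h')
    · exact hw h'
  · intro h; field_simp at h
    have hy2 : y ^ 2 * z = 0 := by linear_combination -z * h
    rcases mul_eq_zero.mp hy2 with h' | h'
    · exact hy (pow_eq_zero_iff two_ne_zero |>.mp h')
    · exact hz h'
  · intro h; field_simp at h
    linarith [mul_self_pos.mpr hw, mul_self_nonneg z]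
  · intro h; field_simp at h
    have hx2 : x ^ 2 * w = 0 := by linear_combination w * hE - w * h
    rcases mul_eq_zero.mp hx2 with h' | h'
    · exact hx (pow_eq_zero_iff two_ne_zero |>.mp h')
    · exact hw h'
  · exact div_ne_zero hXW (mul_ne_zero hz hw)
  · simp [hw, hz]
  · exact div_ne_zero hYW (mul_ne_zero hz hw)
  · exact div_ne_zero hz hw
  · field_simp; linear_combination (-1 : ℚ) * hE
  · field_simp; linear_combination (-(w ^ 2)) * hE
  · field_simp; ring
  · field_simp; linear_combination (-1 : ℚ) * hE
  · field_simp; ring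
  · field_simp; ring

theorem fermat_euler_even_quadruple
    (m : ℕ) (hm : 1 ≤ m) (k : ℕ) (hk : k = 2 * m)
    (X Y Z W : ℚ) (hE : X ^ k + Y ^ k = Z ^ k + W ^ k) (hZW : Z * W ≠ 0)
    (hnd : X * Y * Z * W * (X ^ k - Y ^ k) * (X ^ k - W ^ k) * (Y ^ k - W ^ k) ≠ 0)
    (a b c d : ℚ)
    (ha : a = (X ^ k - W ^ k) / (Z ^ m * W ^ m))
    (hb : b = -(W / Z) ^ m)
    (hc : c = (Y ^ k - W ^ k) / (Z ^ m * W ^ m))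
    (hd : d = (Z / W) ^ m) :
    (a ≠ b ∧ a ≠ c ∧ a ≠ d ∧ b ≠ c ∧ b ≠ d ∧ c ≠ d) ∧
    (a ≠ 0 ∧ b ≠ 0 ∧ c ≠ 0 ∧ d ≠ 0) ∧
    (∃ q : ℚ, a * b + 1 = q ^ k) ∧
    (∃ q : ℚ, a * c + 1 = q ^ k) ∧
    (∃ q : ℚ, a * d + 1 = q ^ k) ∧
    (∃ q : ℚ, b * c + 1 = q ^ k) ∧
    (∃ q : ℚ, b * d + 1 = q ^ k) ∧
    (∃ q : ℚ, c * d + 1 = q ^ k) := by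
  have hk' : k = m * 2 := by omega
  simp only [mul_ne_zero_iff] at hnd
  obtain ⟨⟨⟨⟨⟨⟨hX, hY⟩, hZ⟩, hW⟩, hXY⟩, hXW⟩, hYW⟩ := hnd
  have pk : ∀ t : ℚ, t ^ k = (t ^ m) ^ 2 := fun t => by rw [hk', pow_mul]
  have hE2 : (X ^ m) ^ 2 + (Y ^ m) ^ 2 = (Z ^ m) ^ 2 + (W ^ m) ^ 2 := by
    rw [← pk, ← pk, ← pk, ← pk]; exact hE
  have hXY2 : (X ^ m) ^ 2 - (Y ^ m) ^ 2 ≠ 0 := by rw [← pk, ← pk]; exact hXY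
  have hXW2 : (X ^ m) ^ 2 - (W ^ m) ^ 2 ≠ 0 := by rw [← pk, ← pk]; exact hXW
  have hYW2 : (Y ^ m) ^ 2 - (W ^ m) ^ 2 ≠ 0 := by rw [← pk, ← pk]; exact hYW
  obtain ⟨hdist, hne, e1, e2, e3, e4, e5, e6⟩ :=
    fe_aux (X ^ m) (Y ^ m) (Z ^ m) (W ^ m) (pow_ne_zero m hX) (pow_ne_zero m hY)
      (pow_ne_zero m hZ) (pow_ne_zero m hW) hE2 hXY2 hXW2 hYW2
  have ha' : a = ((X ^ m) ^ 2 - (W ^ m) ^ 2) / (Z ^ m * W ^ m) := by rw [ha, pk X, pk W]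
  have hb' : b = -(W ^ m / Z ^ m) := by rw [hb, div_pow]
  have hc' : c = ((Y ^ m) ^ 2 - (W ^ m) ^ 2) / (Z ^ m * W ^ m) := by rw [hc, pk Y, pk W]
  have hd' : d = Z ^ m / W ^ m := by rw [hd, div_pow]
  rw [ha', hb', hc', hd']
  refine ⟨hdist, hne, ⟨Y / Z, ?_⟩, ⟨X * Y / (Z * W), ?_⟩, ⟨X / W, ?_⟩, ⟨X / Z, ?_⟩,
    ⟨0, ?_⟩, ⟨Y / W, ?_⟩⟩
  · rw [pk, div_pow]; exact e1
  · rw [pk, div_pow, mul_pow, mul_pow]; exact e2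
  · rw [pk, div_pow]; exact e3
  · rw [pk, div_pow]; exact e4
  · rw [pk, zero_pow (by omega : m ≠ 0), zero_pow (two_ne_zero)]; exact e5
  · rw [pk, div_pow]; exact e6
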